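/- (Boolean analog of the Mirsky–Newman–Davenport–Rado theorem) Suppose {0,1}^n is partitioned into pairwise disjoint subcubes whose union is all of {0,1}^n, and let s ≥ 1 be the maximum size of a support among the subcubes in the partition. Then at least two subcubes in the partition have support of size s. -/

import Mathlib

/-- The set of points of a subcube with support `S` and values `v`. -/
def cubeSet (n : ℕ) (S : Finset (Fin n)) (v : Fin n → Bool) : Finset (Fin n → Bool) :=
  Finset.univ.filter (fun x => ∀ i ∈ S, x i = v i)

lemma cubeSet_card (n : ℕ) (S : Finset (Fin n)) (v : Fin n → Bool) :
    (cubeSet n S v).card = 2 ^ (n - S.card) := by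
  have e : {x : Fin n → Bool // ∀ i ∈ S, x i = v i} ≃ ({i : Fin n // i ∉ S} → Bool) :=
    { toFun := fun x i => x.1 i.1
      invFun := fun f => ⟨fun i => if h : i ∈ S then v i else f ⟨i, h⟩, by
        intro i hi; simp [hi]⟩
      left_inv := by
        rintro ⟨x, hx⟩
        ext i
        by_cases h : i ∈ S
        · simp [h, hx i h]
        · simp [h]
      right_inv := by
        intro f
        ext ⟨i, hi⟩
        simp [hi] }
  have h1 : (cubeSet n S v).card = Fintype.card {x : Fin n → Bool // ∀ i ∈ S, x i = v i} := by
    rw [Fintype.card_subtype]; rfl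
  rw [h1, Fintype.card_congr e, Fintype.card_fun, Fintype.card_bool]
  congr 1
  rw [Fintype.card_subtype_compl, Fintype.card_coe, Fintype.card_fin]

theorem boolean_mndr (n N : ℕ) (supp : Fin N → Finset (Fin n))
    (val : Fin N → Fin n → Bool)
    (hdisj : ∀ k l : Fin N, k ≠ l → ∀ x : Fin n → Bool,
      (∀ i ∈ supp k, x i = val k i) → (∀ i ∈ supp l, x i = val l i) → False)
    (hcover : ∀ x : Fin n → Bool, ∃ k, ∀ i ∈ supp k, x i = val k i)
    (s : ℕ) (hs : 1 ≤ s)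
    (hmax : ∀ k, (supp k).card ≤ s) (hex : ∃ k, (supp k).card = s) :
    2 ≤ (Finset.univ.filter (fun k : Fin N => (supp k).card = s)).card := by
  classical
  obtain ⟨k0, hk0⟩ := hex
  have hsn : s ≤ n := hk0 ▸ (supp k0).card_le_univ.trans (by simp)
  -- total count
  have hunion : Finset.univ.biUnion (fun k => cubeSet n (supp k) (val k)) = Finset.univ := by
    apply Finset.eq_univ_of_forall
    intro x
    obtain ⟨k, hk⟩ := hcover x
    exact Finset.mem_biUnion.mpr ⟨k, Finset.mem_univ k, Finset.mem_filter.mpr ⟨Finset.mem_univ x, hk⟩⟩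
  have hsum : ∑ k : Fin N, 2 ^ (n - (supp k).card) = 2 ^ n := by
    have := Finset.card_biUnion (s := (Finset.univ : Finset (Fin N)))
      (t := fun k => cubeSet n (supp k) (val k)) ?_
    · rw [hunion] at this
      simp only [cubeSet_card] at this
      rw [← this]
      simp [Finset.card_univ]
    · intro k _ l _ hkl
      rw [Function.onFun, Finset.disjoint_left]
      intro x hxk hxl
      simp only [cubeSet, Finset.mem_filter] at hxk hxl
      exact hdisj k l hkl x hxk.2 hxl.2
  set m := (Finset.univ.filter (fun k : Fin N => (supp k).card = s)).card with hm
  have hm1 : 1 ≤ m :=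
    Finset.card_pos.mpr ⟨k0, Finset.mem_filter.mpr ⟨Finset.mem_univ _, hk0⟩⟩
  -- split the sum
  have hsplit := Finset.sum_filter_add_sum_filter_not Finset.univ
    (fun k : Fin N => (supp k).card = s) (fun k => 2 ^ (n - (supp k).card))
  have hA : ∑ k ∈ Finset.univ.filter (fun k : Fin N => (supp k).card = s),
      2 ^ (n - (supp k).card) = m * 2 ^ (n - s) := by
    rw [Finset.sum_congr rfl (fun k hk => by
      rw [(Finset.mem_filter.mp hk).2]), Finset.sum_const, smul_eq_mul]
  have hB : (2 : ℕ) ^ (n - s + 1) ∣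
      ∑ k ∈ Finset.univ.filter (fun k : Fin N => ¬ (supp k).card = s),
        2 ^ (n - (supp k).card) := by
    apply Finset.dvd_sum
    intro k hk
    have hks : (supp k).card < s := lt_of_le_of_ne (hmax k) (Finset.mem_filter.mp hk).2
    exact pow_dvd_pow 2 (by omega)
  obtain ⟨c, hc⟩ := hB
  have heq : m * 2 ^ (n - s) + 2 ^ (n - s + 1) * c = 2 ^ n := by
    rw [← hA, ← hc, hsplit, hsum]
  have hdvd : (2 : ℕ) ^ (n - s + 1) ∣ m * 2 ^ (n - s) := by
    have h2n : (2 : ℕ) ^ (n - s + 1) ∣ 2 ^ n := pow_dvd_pow 2 (by omega)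
    have hsub := Nat.dvd_sub h2n (Dvd.intro c rfl)
    have h' : 2 ^ n - 2 ^ (n - s + 1) * c = m * 2 ^ (n - s) := by omega
    rwa [h'] at hsub
  have h2m : 2 ∣ m := by
    have hpos : 0 < (2 : ℕ) ^ (n - s) := Nat.pow_pos (by norm_num)
    have : 2 ^ (n - s) * 2 ∣ 2 ^ (n - s) * m := by
      rw [mul_comm] at hdvd
      have : (2 : ℕ) ^ (n - s + 1) = 2 ^ (n - s) * 2 := by ring
      rwa [this] at hdvd
    exact (Nat.mul_dvd_mul_iff_left hpos).mp this
  omega
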